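/- Let ν ≥ 0, K > ν + 1, and let r > 0 satisfy r = Ψ_ν(2Kr), where Ψ_ν(x) = I_{ν+1}(x)/I_ν(x). Then r < √(1 − 1/(2K)). -/

import Mathlib

open Real Filter Topology

/-- The modified Bessel function of the first kind of real order `ν`. -/
noncomputable def besselI (ν x : ℝ) : ℝ :=
  ∑' m : ℕ, (x / 2) ^ (2 * (m : ℝ) + ν) / ((m.factorial : ℝ) * Real.Gamma ((m : ℝ) + ν + 1))

/-- `Ψ_ν(x) = I_{ν+1}(x) / I_ν(x)`. -/
noncomputable def psi (ν x : ℝ) : ℝ := besselI (ν + 1) x / besselI ν x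

noncomputable def gg (ν y : ℝ) : ℝ :=
  ∑' m : ℕ, y ^ m / ((m.factorial : ℝ) * Real.Gamma ((m : ℝ) + ν + 1))

lemma gamma_arg_pos (ν : ℝ) (hν : 0 ≤ ν) (m : ℕ) : 0 < (m : ℝ) + ν + 1 := by
  positivity

lemma gamma_ge (ν : ℝ) (hν : 0 ≤ ν) (m : ℕ) :
    (m.factorial : ℝ) * Real.Gamma (ν + 1) ≤ Real.Gamma ((m : ℝ) + ν + 1) := by
  induction m with
  | zero => simp
  | succ n ih =>
    have h1 : ((n : ℝ) + ν + 1) ≠ 0 := by positivity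
    have h2 : Real.Gamma ((n : ℝ) + ν + 1 + 1) = ((n : ℝ) + ν + 1) * Real.Gamma ((n : ℝ) + ν + 1) :=
      Real.Gamma_add_one h1
    have h3 : ((n + 1 : ℕ) : ℝ) + ν + 1 = ((n : ℝ) + ν + 1) + 1 := by push_cast; ring
    have hg : 0 ≤ Real.Gamma ((n : ℝ) + ν + 1) := (Real.Gamma_pos_of_pos (by positivity)).le
    rw [h3, h2]
    have : ((n + 1 : ℕ) : ℝ) * ((n.factorial : ℝ) * Real.Gamma (ν + 1)) ≤
        ((n : ℝ) + ν + 1) * Real.Gamma ((n : ℝ) + ν + 1) := by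
      apply mul_le_mul _ ih (by positivity) (by positivity)
      push_cast; linarith
    calc ((n + 1 : ℕ).factorial : ℝ) * Real.Gamma (ν + 1)
        = ((n + 1 : ℕ) : ℝ) * ((n.factorial : ℝ) * Real.Gamma (ν + 1)) := by
          rw [Nat.factorial_succ]; push_cast; ring
      _ ≤ _ := this

lemma term_bound (ν : ℝ) (hν : 0 ≤ ν) (m : ℕ) (y : ℝ) :
    |y ^ m / ((m.factorial : ℝ) * Real.Gamma ((m : ℝ) + ν + 1))| ≤
      (1 / Real.Gamma (ν + 1)) * (|y| ^ m / (m.factorial : ℝ)) := by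
  have hΓν : 0 < Real.Gamma (ν + 1) := Real.Gamma_pos_of_pos (by positivity)
  have hΓ : 0 < Real.Gamma ((m : ℝ) + ν + 1) := Real.Gamma_pos_of_pos (gamma_arg_pos ν hν m)
  have hf : (0:ℝ) < (m.factorial : ℝ) := by exact_mod_cast m.factorial_pos
  have hf1 : (1:ℝ) ≤ (m.factorial : ℝ) := by exact_mod_cast m.factorial_pos
  have hge := gamma_ge ν hν m
  have hAB : Real.Gamma (ν + 1) ≤ Real.Gamma ((m : ℝ) + ν + 1) := by nlinarith
  rw [abs_div, abs_pow,
    abs_of_pos (show (0:ℝ) < (m.factorial : ℝ) * Real.Gamma ((m : ℝ) + ν + 1) by positivity)]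
  calc |y| ^ m / ((m.factorial : ℝ) * Real.Gamma ((m : ℝ) + ν + 1))
      ≤ |y| ^ m / ((m.factorial : ℝ) * Real.Gamma (ν + 1)) := by gcongr
    _ = (1 / Real.Gamma (ν + 1)) * (|y| ^ m / (m.factorial : ℝ)) := by
        rw [one_div, div_eq_mul_inv, div_eq_mul_inv, mul_inv]; ring

lemma summable_gg (ν : ℝ) (hν : 0 ≤ ν) (y : ℝ) :
    Summable fun m : ℕ => y ^ m / ((m.factorial : ℝ) * Real.Gamma ((m : ℝ) + ν + 1)) := by
  apply Summable.of_norm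
  apply Summable.of_nonneg_of_le (fun m => norm_nonneg _) (fun m => term_bound ν hν m y)
  exact (Real.summable_pow_div_factorial |y|).mul_left _

lemma gg_pos (ν : ℝ) (hν : 0 ≤ ν) (y : ℝ) (hy : 0 ≤ y) : 0 < gg ν y := by
  have hsum := summable_gg ν hν y
  apply Summable.tsum_pos hsum (fun m => by positivity) 0
  have hΓν : 0 < Real.Gamma ((0:ℝ) + ν + 1) := Real.Gamma_pos_of_pos (by positivity)
  simp only [pow_zero, Nat.factorial_zero, Nat.cast_one, one_mul, Nat.cast_zero]
  positivity

lemma summable_deriv_gg (ν : ℝ) (hν : 0 ≤ ν) (R : ℝ) (hR : 0 ≤ R) :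
    Summable (fun m : ℕ => if m = 0 then (0:ℝ) else
      (1 / Real.Gamma (ν + 1)) * (R ^ (m-1) / ((m-1).factorial : ℝ))) := by
  rw [← summable_nat_add_iff 1]
  simp only [Nat.add_sub_cancel, Nat.succ_ne_zero, if_false]
  exact (Real.summable_pow_div_factorial R).mul_left _

lemma deriv_term_bound (ν : ℝ) (hν : 0 ≤ ν) (R : ℝ) (m : ℕ) (z : ℝ) (hz : |z| ≤ R) :
    ‖((m : ℝ) * z ^ (m-1)) / ((m.factorial : ℝ) * Real.Gamma ((m : ℝ) + ν + 1))‖ ≤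
      (if m = 0 then (0:ℝ) else
      (1 / Real.Gamma (ν + 1)) * (R ^ (m-1) / ((m-1).factorial : ℝ))) := by
  have hR : 0 ≤ R := le_trans (abs_nonneg z) hz
  match m with
  | 0 => simp
  | (n+1) =>
    simp only [Nat.succ_ne_zero, if_false, Nat.add_sub_cancel]
    have hΓν : 0 < Real.Gamma (ν + 1) := Real.Gamma_pos_of_pos (by positivity)
    have hΓ : 0 < Real.Gamma (((n+1:ℕ) : ℝ) + ν + 1) :=
      Real.Gamma_pos_of_pos (gamma_arg_pos ν hν (n+1))
    have hf : (0:ℝ) < ((n+1:ℕ).factorial : ℝ) := by exact_mod_cast (n+1).factorial_pos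
    have hfn : (0:ℝ) < (n.factorial : ℝ) := by exact_mod_cast n.factorial_pos
    have hge := gamma_ge ν hν (n+1)
    have hfact : ((n+1:ℕ).factorial : ℝ) = ((n:ℝ)+1) * (n.factorial : ℝ) := by
      rw [Nat.factorial_succ]; push_cast; ring
    rw [Real.norm_eq_abs, abs_div, abs_mul, abs_pow,
      abs_of_pos (show (0:ℝ) < ((n+1:ℕ).factorial : ℝ) * Real.Gamma (((n+1:ℕ):ℝ) + ν + 1) by positivity)]
    have habs : |((n+1:ℕ) : ℝ)| = ((n:ℝ)+1) := by
      rw [abs_of_nonneg (by positivity)]; push_cast; ring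
    rw [habs]
    have hzn : |z| ^ n ≤ R ^ n := pow_le_pow_left₀ (abs_nonneg z) hz n
    have hΓge : (n.factorial : ℝ) * Real.Gamma (ν+1) ≤ Real.Gamma (((n+1:ℕ):ℝ) + ν + 1) := by
      have h1 : (n.factorial : ℝ) ≤ ((n+1:ℕ).factorial : ℝ) := by
        exact_mod_cast Nat.factorial_le (Nat.le_succ n)
      nlinarith
    calc ((n:ℝ)+1) * |z| ^ n / (((n+1:ℕ).factorial : ℝ) * Real.Gamma (((n+1:ℕ):ℝ) + ν + 1))
        = |z| ^ n / ((n.factorial : ℝ) * Real.Gamma (((n+1:ℕ):ℝ) + ν + 1)) := by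
          rw [hfact]; field_simp
      _ ≤ R ^ n / ((n.factorial : ℝ) * Real.Gamma (((n+1:ℕ):ℝ) + ν + 1)) := by gcongr
      _ ≤ R ^ n / ((n.factorial : ℝ) * ((n.factorial : ℝ) * Real.Gamma (ν+1))) := by
          gcongr
      _ ≤ 1 / Real.Gamma (ν + 1) * (R ^ n / (n.factorial : ℝ)) := by
          rw [div_le_iff₀ (by positivity), one_div]
          have hid : (Real.Gamma (ν+1))⁻¹ * (R ^ n / (n.factorial:ℝ)) *
              ((n.factorial:ℝ) * ((n.factorial:ℝ) * Real.Gamma (ν+1))) = R ^ n * (n.factorial:ℝ) := by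
            field_simp
          rw [hid]
          have h2 : (1:ℝ) ≤ (n.factorial : ℝ) := by exact_mod_cast n.factorial_pos
          nlinarith [pow_nonneg hR n]

lemma hasDerivAt_gg (ν : ℝ) (hν : 0 ≤ ν) (y : ℝ) :
    HasDerivAt (gg ν) (gg (ν + 1) y) y := by
  set R := |y| + 1 with hRdef
  have hR : 0 ≤ R := by positivity
  have hyR : y ∈ Set.Ioo (-R) R := by
    constructor <;> [nlinarith [neg_abs_le y]; nlinarith [le_abs_self y]]
  have key : HasDerivAt (fun z => ∑' m : ℕ, z ^ m / ((m.factorial : ℝ) * Real.Gamma ((m : ℝ) + ν + 1)))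
      (∑' m : ℕ, ((m : ℝ) * y ^ (m-1)) / ((m.factorial : ℝ) * Real.Gamma ((m : ℝ) + ν + 1))) y := by
    apply hasDerivAt_tsum_of_isPreconnected (summable_deriv_gg ν hν R hR)
      isOpen_Ioo (convex_Ioo _ _).isPreconnected
      (fun m z _ => (hasDerivAt_pow m z).div_const _)
      (fun m z hzt => deriv_term_bound ν hν R m z (by
        rw [abs_le]; exact ⟨hzt.1.le, hzt.2.le⟩))
      hyR (summable_gg ν hν y) hyR
  have hserd : Summable (fun m : ℕ =>
      ((m : ℝ) * y ^ (m-1)) / ((m.factorial : ℝ) * Real.Gamma ((m : ℝ) + ν + 1))) := by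
    apply Summable.of_norm
    apply Summable.of_nonneg_of_le (fun m => norm_nonneg _)
      (fun m => deriv_term_bound ν hν R m y (by nlinarith [le_abs_self y, neg_abs_le y, abs_nonneg y]))
    exact summable_deriv_gg ν hν R hR
  have heq : (∑' m : ℕ, ((m : ℝ) * y ^ (m-1)) / ((m.factorial : ℝ) * Real.Gamma ((m : ℝ) + ν + 1)))
      = gg (ν + 1) y := by
    rw [Summable.tsum_eq_zero_add hserd]
    simp only [Nat.cast_zero, zero_mul, zero_div, zero_add]
    unfold gg
    apply tsum_congr
    intro n
    have hfact : ((n+1 : ℕ).factorial : ℝ) = ((n:ℝ)+1) * (n.factorial : ℝ) := by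
      rw [Nat.factorial_succ]; push_cast; ring
    have harg : ((n+1 : ℕ) : ℝ) + ν + 1 = (n : ℝ) + (ν + 1) + 1 := by push_cast; ring
    rw [hfact, harg]
    have h1 : (((n+1 : ℕ)) : ℝ) = (n:ℝ) + 1 := by push_cast; ring
    rw [h1]
    simp only [Nat.add_sub_cancel]
    have hn1 : ((n:ℝ)+1) ≠ 0 := by positivity
    field_simp
  rw [heq] at key
  exact key

lemma summable_b (ν : ℝ) (hν : 0 ≤ ν) (y : ℝ) :
    Summable (fun m : ℕ => (m : ℝ) * (y ^ m / ((m.factorial : ℝ) * Real.Gamma ((m : ℝ) + ν + 2)))) := by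
  rw [← summable_nat_add_iff 1]
  have : ∀ n : ℕ, ((n+1 : ℕ) : ℝ) * (y ^ (n+1) / (((n+1:ℕ).factorial : ℝ) * Real.Gamma (((n+1:ℕ) : ℝ) + ν + 2)))
      = y * (y ^ n / ((n.factorial : ℝ) * Real.Gamma ((n : ℝ) + (ν + 2) + 1))) := by
    intro n
    have hfact : ((n+1 : ℕ).factorial : ℝ) = ((n:ℝ)+1) * (n.factorial : ℝ) := by
      rw [Nat.factorial_succ]; push_cast; ring
    have harg : ((n+1 : ℕ) : ℝ) + ν + 2 = (n : ℝ) + (ν + 2) + 1 := by push_cast; ring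
    have h1 : (((n+1 : ℕ)) : ℝ) = (n:ℝ) + 1 := by push_cast; ring
    rw [hfact, harg, h1, pow_succ]
    have hn1 : ((n:ℝ)+1) ≠ 0 := by positivity
    have hΓ : Real.Gamma ((n : ℝ) + (ν + 2) + 1) ≠ 0 := by
      have : 0 < (n : ℝ) + (ν + 2) + 1 := by positivity
      exact (Real.Gamma_pos_of_pos this).ne'
    have hfn : ((n.factorial : ℝ)) ≠ 0 := by
      have : (0:ℝ) < (n.factorial : ℝ) := by exact_mod_cast n.factorial_pos
      exact this.ne'
    field_simp
  rw [show (fun n : ℕ => ((n+1 : ℕ) : ℝ) * (y ^ (n+1) / (((n+1:ℕ).factorial : ℝ) * Real.Gamma (((n+1:ℕ) : ℝ) + ν + 2))))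
      = (fun n : ℕ => y * (y ^ n / ((n.factorial : ℝ) * Real.Gamma ((n : ℝ) + (ν + 2) + 1)))) from funext this]
  exact (summable_gg (ν + 2) (by linarith) y).mul_left y

lemma tsum_b (ν : ℝ) (hν : 0 ≤ ν) (y : ℝ) :
    (∑' m : ℕ, (m : ℝ) * (y ^ m / ((m.factorial : ℝ) * Real.Gamma ((m : ℝ) + ν + 2))))
      = y * gg (ν + 2) y := by
  rw [Summable.tsum_eq_zero_add (summable_b ν hν y)]
  simp only [Nat.cast_zero, zero_mul, zero_add]
  unfold gg
  rw [← tsum_mul_left]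
  apply tsum_congr
  intro n
  have hfact : ((n+1 : ℕ).factorial : ℝ) = ((n:ℝ)+1) * (n.factorial : ℝ) := by
    rw [Nat.factorial_succ]; push_cast; ring
  have harg : ((n+1 : ℕ) : ℝ) + ν + 2 = (n : ℝ) + (ν + 2) + 1 := by push_cast; ring
  have h1 : (((n+1 : ℕ)) : ℝ) = (n:ℝ) + 1 := by push_cast; ring
  rw [hfact, harg, h1, pow_succ]
  have hn1 : ((n:ℝ)+1) ≠ 0 := by positivity
  have hΓ : Real.Gamma ((n : ℝ) + (ν + 2) + 1) ≠ 0 := by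
    have : 0 < (n : ℝ) + (ν + 2) + 1 := by positivity
    exact (Real.Gamma_pos_of_pos this).ne'
  have hfn : ((n.factorial : ℝ)) ≠ 0 := by
    have : (0:ℝ) < (n.factorial : ℝ) := by exact_mod_cast n.factorial_pos
    exact this.ne'
  field_simp

lemma gg_rec (ν : ℝ) (hν : 0 ≤ ν) (y : ℝ) :
    gg ν y = (ν + 1) * gg (ν + 1) y + y * gg (ν + 2) y := by
  have hsum1 : Summable (fun m : ℕ => (ν + 1) * (y ^ m / ((m.factorial : ℝ) * Real.Gamma ((m : ℝ) + (ν+1) + 1)))) :=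
    (summable_gg (ν + 1) (by linarith) y).mul_left _
  have hsum2 := summable_b ν hν y
  have hterm : ∀ m : ℕ, y ^ m / ((m.factorial : ℝ) * Real.Gamma ((m : ℝ) + ν + 1))
      = (ν + 1) * (y ^ m / ((m.factorial : ℝ) * Real.Gamma ((m : ℝ) + (ν+1) + 1)))
        + (m : ℝ) * (y ^ m / ((m.factorial : ℝ) * Real.Gamma ((m : ℝ) + ν + 2))) := by
    intro m
    have harg : (0:ℝ) < (m : ℝ) + ν + 1 := by positivity
    have hΓ1 : 0 < Real.Gamma ((m : ℝ) + ν + 1) := Real.Gamma_pos_of_pos harg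
    have hrel : Real.Gamma ((m : ℝ) + ν + 1 + 1) = ((m : ℝ) + ν + 1) * Real.Gamma ((m : ℝ) + ν + 1) :=
      Real.Gamma_add_one harg.ne'
    have h2 : ((m : ℝ) + (ν+1) + 1) = (m : ℝ) + ν + 1 + 1 := by ring
    have h3 : ((m : ℝ) + ν + 2) = (m : ℝ) + ν + 1 + 1 := by ring
    rw [h2, h3, hrel]
    have hfn : ((m.factorial : ℝ)) ≠ 0 := by
      have : (0:ℝ) < (m.factorial : ℝ) := by exact_mod_cast m.factorial_pos
      exact this.ne'
    field_simp
    ring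
  unfold gg
  calc (∑' m : ℕ, y ^ m / ((m.factorial : ℝ) * Real.Gamma ((m : ℝ) + ν + 1)))
      = ∑' m : ℕ, ((ν + 1) * (y ^ m / ((m.factorial : ℝ) * Real.Gamma ((m : ℝ) + (ν+1) + 1)))
        + (m : ℝ) * (y ^ m / ((m.factorial : ℝ) * Real.Gamma ((m : ℝ) + ν + 2)))) := tsum_congr hterm
    _ = (∑' m : ℕ, (ν + 1) * (y ^ m / ((m.factorial : ℝ) * Real.Gamma ((m : ℝ) + (ν+1) + 1))))
        + ∑' m : ℕ, (m : ℝ) * (y ^ m / ((m.factorial : ℝ) * Real.Gamma ((m : ℝ) + ν + 2))) :=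
        Summable.tsum_add hsum1 hsum2
    _ = (ν + 1) * gg (ν+1) y + y * gg (ν + 2) y := by
        rw [tsum_mul_left, tsum_b ν hν y]; rfl

noncomputable def GG (ν y : ℝ) : ℝ :=
  (gg ν y) ^ 2 - ((2*ν+1)/2) * gg ν y * gg (ν+1) y - y * (gg (ν+1) y) ^ 2

lemma hasDerivAt_GG (ν : ℝ) (hν : 0 ≤ ν) (y : ℝ) :
    HasDerivAt (GG ν)
      (2 * gg ν y * gg (ν+1) y
        - ((2*ν+1)/2) * (gg (ν+1) y * gg (ν+1) y + gg ν y * gg (ν+2) y)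
        - ((gg (ν+1) y) ^ 2 + y * (2 * gg (ν+1) y * gg (ν+2) y))) y := by
  have h0 := hasDerivAt_gg ν hν y
  have h1 := hasDerivAt_gg (ν+1) (by linarith) y
  have h1' : HasDerivAt (gg (ν+1)) (gg (ν+2) y) y := by
    convert h1 using 2; ring_nf
  have hA : HasDerivAt (fun z => (gg ν z) ^ 2) (2 * gg ν y * gg (ν+1) y) y := by
    have h := h0.mul h0
    have he : (fun z => (gg ν z) ^ 2) = fun z => gg ν z * gg ν z := by ext z; ring
    rw [he]
    convert h using 1
    · rfl
    · rfl
    · rfl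
    · ring
  have hB : HasDerivAt (fun z => ((2*ν+1)/2) * gg ν z * gg (ν+1) z)
      (((2*ν+1)/2) * (gg (ν+1) y * gg (ν+1) y + gg ν y * gg (ν+2) y)) y := by
    have h := (h0.const_mul ((2*ν+1)/2)).mul h1'
    have he : (fun z => ((2*ν+1)/2) * gg ν z * gg (ν+1) z)
        = fun z => (((2*ν+1)/2) * gg ν z) * gg (ν+1) z := by ext z; ring
    rw [he]
    convert h using 1
    · rfl
    · rfl
    · rfl
    · ring
  have hC : HasDerivAt (fun z => z * (gg (ν+1) z) ^ 2)
      ((gg (ν+1) y) ^ 2 + y * (2 * gg (ν+1) y * gg (ν+2) y)) y := by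
    have hsq : HasDerivAt (fun z => (gg (ν+1) z) ^ 2) (2 * gg (ν+1) y * gg (ν+2) y) y := by
      have h := h1'.mul h1'
      have he : (fun z => (gg (ν+1) z) ^ 2) = fun z => gg (ν+1) z * gg (ν+1) z := by ext z; ring
      rw [he]
      convert h using 1
      · rfl
      · rfl
      · rfl
      · ring
    have h := (hasDerivAt_id y).mul hsq
    convert h using 1
    · rfl
    · rfl
    · rfl
    · simp only [id]
      ring
  exact (hA.sub hB).sub hC

lemma GG_pos (ν : ℝ) (hν : 0 ≤ ν) (y : ℝ) (hy : 0 < y) : 0 < GG ν y := by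
  set p : ℝ := ν + 1/2 with hp
  have hppos : 0 < p := by positivity
  set H : ℝ → ℝ := fun z => z ^ p * GG ν z with hH
  have hcont : ContinuousOn H (Set.Ici 0) := by
    apply ContinuousOn.mul
    · intro z hz
      exact (Real.continuousAt_rpow_const z p (Or.inr hppos.le)).continuousWithinAt
    · intro z hz
      exact ((hasDerivAt_GG ν hν z).continuousAt).continuousWithinAt
  have hderiv : ∀ z ∈ Set.Ioi (0:ℝ), 0 < deriv H z := by
    intro z hz
    have hz0 : (0:ℝ) < z := hz
    have hrpow : HasDerivAt (fun w : ℝ => w ^ p) (p * z ^ (p - 1)) z :=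
      Real.hasDerivAt_rpow_const (Or.inl hz0.ne')
    have hGd := hasDerivAt_GG ν hν z
    have hHd := hrpow.mul hGd
    rw [show H = (fun w : ℝ => w ^ p) * GG ν from rfl, hHd.deriv]
    have ha : 0 < gg (ν+1) z := gg_pos (ν+1) (by linarith) z hz0.le
    have hb : 0 < gg (ν+2) z := gg_pos (ν+2) (by linarith) z hz0.le
    have hc : 0 < gg ν z := gg_pos ν hν z hz0.le
    have hrec := gg_rec ν hν z
    have hid : p * z ^ (p - 1) * GG ν z + z ^ p *
        (2 * gg ν z * gg (ν+1) z
          - ((2*ν+1)/2) * (gg (ν+1) z * gg (ν+1) z + gg ν z * gg (ν+2) z)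
          - ((gg (ν+1) z) ^ 2 + z * (2 * gg (ν+1) z * gg (ν+2) z)))
        = z ^ (p-1) * ((2*ν+1)/4) * (gg ν z * gg (ν+1) z) := by
      have hzp : z ^ (p - 1) * z = z ^ p := by
        rw [Real.rpow_sub hz0, Real.rpow_one]
        field_simp
      rw [← hzp]
      unfold GG
      rw [hrec]
      ring
    rw [hid]
    have hzp1 : 0 < z ^ (p - 1) := Real.rpow_pos_of_pos hz0 _
    have h2ν : 0 < (2*ν+1)/4 := by linarith
    positivity
  have hmono : StrictMonoOn H (Set.Ici 0) := by
    apply strictMonoOn_of_deriv_pos (convex_Ici 0) hcont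
    rwa [interior_Ici]
  have hlt : H 0 < H y := hmono (Set.self_mem_Ici) (Set.mem_Ici.mpr hy.le) hy
  have hH0 : H 0 = 0 := by
    simp only [hH]
    rw [Real.zero_rpow hppos.ne']
    ring
  rw [hH0] at hlt
  have hyp : 0 < y ^ p := Real.rpow_pos_of_pos hy _
  by_contra hcon
  push_neg at hcon
  have hHy : H y = y ^ p * GG ν y := rfl
  rw [hHy] at hlt
  have := mul_nonpos_of_nonneg_of_nonpos hyp.le hcon
  linarith



lemma besselI_eq (ν x : ℝ) (hx : 0 < x) :
    besselI ν x = (x/2) ^ ν * gg ν (x^2/4) := by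
  have h2 : 0 < x / 2 := by linarith
  unfold besselI gg
  rw [← tsum_mul_left]
  apply tsum_congr
  intro m
  have hterm : (x / 2) ^ (2 * (m : ℝ) + ν) = (x/2) ^ ν * (x^2/4) ^ m := by
    rw [show 2 * (m : ℝ) + ν = ν + ((2*m : ℕ) : ℝ) by push_cast; ring]
    rw [Real.rpow_add h2, Real.rpow_natCast]
    congr 1
    rw [pow_mul]
    congr 1
    ring
  rw [hterm]
  ring

set_option maxHeartbeats 1000000 in
theorem stmt_13 (ν K r : ℝ) (hν : 0 ≤ ν) (hK : ν + 1 < K) (hr : 0 < r)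
    (heq : r = psi ν (2 * K * r)) :
    r < Real.sqrt (1 - 1 / (2 * K)) := by
  have hKpos : 0 < K := by linarith
  set x : ℝ := 2 * K * r with hxdef
  have hx : 0 < x := by positivity
  have hy : 0 < x^2/4 := by positivity
  set y : ℝ := x^2/4 with hydef
  set a : ℝ := gg ν y with hadef
  set b : ℝ := gg (ν+1) y with hbdef
  have ha : 0 < a := gg_pos ν hν y hy.le
  have hb : 0 < b := gg_pos (ν+1) (by linarith) y hy.le
  have hIν : besselI ν x = (x/2) ^ ν * a := besselI_eq ν x hx
  have hIν1 : besselI (ν+1) x = (x/2) ^ (ν+1) * b := besselI_eq (ν+1) x hx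
  have hxhalf : 0 < x / 2 := by linarith
  have hpow : 0 < (x/2 : ℝ) ^ ν := Real.rpow_pos_of_pos hxhalf ν
  have hbessel_pos : 0 < besselI ν x := by rw [hIν]; positivity
  have hrb : r * besselI ν x = besselI (ν+1) x := by
    rw [heq]
    show psi ν x * besselI ν x = besselI (ν+1) x
    rw [psi]
    exact div_mul_cancel₀ _ hbessel_pos.ne' 
  have hpow1 : ((x/2 : ℝ)) ^ (ν+1) = (x/2) ^ ν * (x/2) := by
    rw [Real.rpow_add_one hxhalf.ne' ν]
  rw [hIν, hIν1, hpow1] at hrb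
  have hxb : x * b = 2 * r * a := by
    have h := hrb
    have h' : ((x/2 : ℝ)) ^ ν * (r * a) = ((x/2 : ℝ)) ^ ν * ((x/2) * b) := by
      linear_combination h
    have hcancel : r * a = (x/2) * b := mul_left_cancel₀ hpow.ne' h'
    linarith
  have hGG := GG_pos ν hν y hy
  unfold GG at hGG
  rw [← hadef, ← hbdef] at hGG
  have hGG2 : 0 < 4*a^2 - 2*(2*ν+1)*a*b - x^2*b^2 := by
    rw [hydef] at hGG
    nlinarith [hGG]
  have hGG3 : 0 < (4*a^2 - 2*(2*ν+1)*a*b - x^2*b^2) * x := mul_pos hGG2 hx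
  have habx : a*b*x = 2*r*a^2 := by linear_combination a * hxb
  have heq2 : x^2*b^2 = 4*r^2*a^2 := by linear_combination (x*b + 2*r*a) * hxb
  have hineq : 0 < x - (2*ν+1)*r - r^2*x := by
    by_contra hcon
    push_neg at hcon
    nlinarith [hGG3, habx, heq2, mul_pos ha ha]
  have h5 : 0 < 2*K - (2*ν+1) - 2*K*r^2 := by
    by_contra hcon
    push_neg at hcon
    rw [hxdef] at hineq
    nlinarith [hineq]
  have hrsq : r^2 < 1 - 1/(2*K) := by
    have h2K : (0:ℝ) < 2*K := by linarith
    rw [show (1:ℝ) - 1/(2*K) = (2*K-1)/(2*K) by rw [eq_div_iff h2K.ne']; field_simp]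
    rw [lt_div_iff₀ h2K]
    nlinarith
  rw [← Real.lt_sqrt hr.le] at hrsq
  exact hrsq
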